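/- For b ≥ a/2 > 0, the function x ↦ (1 + a/x)^(x+b) is decreasing on (0, ∞) and bounded below by e^a; hence J(x;a,b) = (1+a/x)^(x+b) - e^a is nonnegative and decreasing (the n = 0 and n = 1 conditions of the Alzer–Berg theorem that J is completely monotonic iff a ≤ 2b). -/

import Mathlib

open Real Filter Topology

lemma log_le_aux (t : ℝ) (ht : 0 < t) :
    Real.log (1 + t) ≤ t * (2 + t) / (2 * (1 + t)) := by
  have h1 : (0:ℝ) < 1 + t := by linarith
  have h2 : 0 < Real.log (1 + t) := Real.log_pos (by linarith)
  have h3 : Real.log (1 + t) < Real.sinh (Real.log (1 + t)) :=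
    Real.self_lt_sinh_iff.2 h2
  rw [Real.sinh_log h1] at h3
  have h4 : (1 + t - (1 + t)⁻¹) / 2 = t * (2 + t) / (2 * (1 + t)) := by
    field_simp
    ring
  linarith

lemma hasDerivAt_aux (a b x : ℝ) (hx : 0 < x) (hpos : 0 < 1 + a / x) :
    HasDerivAt (fun x : ℝ => (x + b) * Real.log (1 + a / x))
      (1 * Real.log (1 + a / x) + (x + b) * ((a * -(x ^ 2)⁻¹) / (1 + a / x))) x := by
  have hinner : HasDerivAt (fun x : ℝ => 1 + a / x) (a * -(x ^ 2)⁻¹) x := by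
    have h := ((hasDerivAt_inv hx.ne').const_mul a).const_add 1
    simpa [div_eq_mul_inv] using h
  have hlog : HasDerivAt (fun x : ℝ => Real.log (1 + a / x))
      ((a * -(x ^ 2)⁻¹) / (1 + a / x)) x := hinner.log hpos.ne'
  exact ((hasDerivAt_id x).add_const b).mul hlog

lemma g_antitone (a b : ℝ) (ha : 0 < a) (hb : a / 2 ≤ b) :
    AntitoneOn (fun x : ℝ => (x + b) * Real.log (1 + a / x)) (Set.Ioi 0) := by
  have hint : interior (Set.Ioi (0:ℝ)) = Set.Ioi 0 := interior_Ioi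
  have hdiff : DifferentiableOn ℝ (fun x : ℝ => (x + b) * Real.log (1 + a / x))
      (interior (Set.Ioi (0:ℝ))) := by
    rw [hint]
    intro x hx
    have hx' : (0:ℝ) < x := hx
    have hpos : 0 < 1 + a / x := by positivity
    exact (hasDerivAt_aux a b x hx' hpos).differentiableAt.differentiableWithinAt
  refine antitoneOn_of_deriv_nonpos (convex_Ioi 0) ?_ hdiff ?_
  · have := hdiff.continuousOn
    rwa [hint] at this
  · rw [hint]
    intro x hx
    have hx' : (0:ℝ) < x := hx
    have hpos : 0 < 1 + a / x := by positivity
    rw [(hasDerivAt_aux a b x hx' hpos).deriv]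
    have hta : 0 < a / x := by positivity
    have hL := log_le_aux (a / x) hta
    have hL' : Real.log (1 + a / x) ≤ a * (2 * x + a) / (2 * x * (x + a)) := by
      have heq : (a / x) * (2 + a / x) / (2 * (1 + a / x))
          = a * (2 * x + a) / (2 * x * (x + a)) := by
        field_simp
      linarith [heq ▸ hL]
    have hrw : 1 * Real.log (1 + a / x) + (x + b) * ((a * -(x ^ 2)⁻¹) / (1 + a / x))
        = Real.log (1 + a / x) - (x + b) * a / (x * (x + a)) := by
      rw [one_mul]
      congr 1
      field_simp
    rw [hrw]
    have hstep : a * (2 * x + a) / (2 * x * (x + a)) ≤ (x + b) * a / (x * (x + a)) := by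
      rw [div_le_div_iff₀ (by positivity) (by positivity)]
      nlinarith [mul_nonneg (mul_nonneg (mul_pos ha hx').le (by linarith : (0:ℝ) ≤ x + a)) (by linarith : (0:ℝ) ≤ 2 * b - a)]
    linarith

theorem stmt_14 (a b : ℝ) (ha : 0 < a) (hb : a / 2 ≤ b) :
    AntitoneOn (fun x : ℝ => (1 + a / x) ^ (x + b)) (Set.Ioi 0) ∧
    (∀ x ∈ Set.Ioi (0 : ℝ), Real.exp a ≤ (1 + a / x) ^ (x + b)) ∧
    (∀ x ∈ Set.Ioi (0 : ℝ), 0 ≤ (1 + a / x) ^ (x + b) - Real.exp a) ∧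
    AntitoneOn (fun x : ℝ => (1 + a / x) ^ (x + b) - Real.exp a) (Set.Ioi 0) := by
  have feq : ∀ x ∈ Set.Ioi (0:ℝ),
      (1 + a / x) ^ (x + b) = Real.exp ((x + b) * Real.log (1 + a / x)) := by
    intro x hx
    have hx' : (0:ℝ) < x := hx
    have hpos : 0 < 1 + a / x := by positivity
    rw [Real.rpow_def_of_pos hpos, mul_comm]
  have hant : AntitoneOn (fun x : ℝ => (1 + a / x) ^ (x + b)) (Set.Ioi 0) := by
    intro x hx y hy hxy
    show (1 + a / y) ^ (y + b) ≤ (1 + a / x) ^ (x + b)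
    rw [feq x hx, feq y hy]
    exact Real.exp_le_exp.2 (g_antitone a b ha hb hx hy hxy)
  have htend : Tendsto (fun x : ℝ => (1 + a / x) ^ (x + b)) atTop (𝓝 (Real.exp a)) := by
    have h1 : Tendsto (fun x : ℝ => (1 + a / x) ^ x) atTop (𝓝 (Real.exp a)) :=
      tendsto_one_add_div_rpow_exp a
    have hbase : Tendsto (fun x : ℝ => 1 + a / x) atTop (𝓝 1) := by
      have : Tendsto (fun x : ℝ => a / x) atTop (𝓝 0) :=
        tendsto_const_nhds.div_atTop tendsto_id
      simpa using tendsto_const_nhds.add this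
    have h2 : Tendsto (fun x : ℝ => (1 + a / x) ^ b) atTop (𝓝 1) := by
      have := hbase.rpow_const (p := b) (Or.inl one_ne_zero)
      simpa using this
    have h3 : Tendsto (fun x : ℝ => (1 + a / x) ^ x * (1 + a / x) ^ b) atTop
        (𝓝 (Real.exp a * 1)) := h1.mul h2
    rw [mul_one] at h3
    apply h3.congr' ?_
    filter_upwards [eventually_gt_atTop (0:ℝ)] with x hx
    have hpos : 0 < 1 + a / x := by positivity
    rw [← Real.rpow_add hpos]
  have hge : ∀ x ∈ Set.Ioi (0:ℝ), Real.exp a ≤ (1 + a / x) ^ (x + b) := by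
    intro x hx
    refine le_of_tendsto htend ?_
    filter_upwards [eventually_ge_atTop x] with y hy
    exact hant hx (lt_of_lt_of_le hx hy) hy
  refine ⟨hant, hge, fun x hx => by linarith [hge x hx], fun x hx y hy hxy => by
    have := hant hx hy hxy; linarith⟩
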